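/- The function p ↦ p·ψ'(p), where ψ is the digamma function and p ranges over positive integers, is strictly decreasing, equals π²/6 at p = 1, and tends to 1 as p → ∞; moreover p ψ'(p) = 1 + 1/(2p) + O(p^{−2}). -/

import Mathlib

open Real Filter


/-- Generic telescoping sum. -/
lemma tele_hasSum (g : ℝ → ℝ) (x : ℝ)
    (hmono : ∀ n : ℕ, g (x + n + 1) ≤ g (x + n))
    (hlim : Tendsto (fun n : ℕ => g (x + n)) atTop (nhds 0)) :
    HasSum (fun k : ℕ => g (x + k) - g (x + k + 1)) (g x) := by
  have key : ∀ n : ℕ, ∑ i ∈ Finset.range n, (g (x + i) - g (x + i + 1)) = g x - g (x + n) := by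
    intro n
    induction n with
    | zero => simp
    | succ n ih => rw [Finset.sum_range_succ, ih]; push_cast; ring
  rw [hasSum_iff_tendsto_nat_of_nonneg (fun i => sub_nonneg.2 (hmono i))]
  simp_rw [key]
  simpa using tendsto_const_nhds.sub hlim

lemma termwise_upper (y : ℝ) (hy : 1 ≤ y) :
    1 / y ^ 2 ≤ 1 / (y - 1/2) - 1 / (y + 1/2) := by
  have h1 : (0:ℝ) < y - 1/2 := by linarith
  have h2 : (0:ℝ) < y + 1/2 := by linarith
  have h3 : (0:ℝ) < y := by linarith
  rw [div_sub_div _ _ (ne_of_gt h1) (ne_of_gt h2), div_le_div_iff₀ (by positivity) (by positivity)]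
  nlinarith

lemma termwise_lower (y : ℝ) (hy : 1 ≤ y) :
    (1/y + 1/(2*y^2)) - (1/(y+1) + 1/(2*(y+1)^2)) ≤ 1 / y ^ 2 := by
  have h3 : (0:ℝ) < y := by linarith
  have h4 : (0:ℝ) < y + 1 := by linarith
  rw [sub_le_iff_le_add]
  rw [div_add_div _ _ (by positivity) (by positivity), div_add_div _ _ (by positivity) (by positivity),
    div_add_div _ _ (by positivity) (by positivity), div_le_div_iff₀ (by positivity) (by positivity)]
  nlinarith [sq_nonneg y, sq_nonneg (y+1), h3.le, h4.le]

lemma tendsto_one_div_shift (a : ℝ) : Tendsto (fun n : ℕ => 1 / (a + n)) atTop (nhds 0) := by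
  have h : Tendsto (fun n : ℕ => a + (n : ℝ)) atTop atTop :=
    tendsto_atTop_add_const_left _ _ tendsto_natCast_atTop_atTop
  simpa [one_div, Pi.inv_def] using h.inv_tendsto_atTop

lemma upper_tele (x : ℝ) (hx : 1 ≤ x) :
    HasSum (fun k : ℕ => 1 / (x + k - 1/2) - 1 / (x + k + 1/2)) (1 / (x - 1/2)) := by
  have h := tele_hasSum (fun y => 1 / (y - 1/2)) x
    (fun n => by
      have h1 : (0:ℝ) < x + n - 1/2 := by
        have : (0:ℝ) ≤ (n:ℕ) := by positivity
        have : (0:ℝ) ≤ (n:ℝ) := Nat.cast_nonneg n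
        linarith
      apply one_div_le_one_div_of_le h1; linarith)
    (by
      have := tendsto_one_div_shift (x - 1/2)
      simpa [add_right_comm, sub_eq_add_neg, add_assoc, add_comm, add_left_comm] using this)
  convert h using 2 with k
  ring_nf

lemma lower_tele (x : ℝ) (hx : 1 ≤ x) :
    HasSum (fun k : ℕ => (1/(x+k) + 1/(2*(x+k)^2)) - (1/(x+k+1) + 1/(2*(x+k+1)^2)))
      (1/x + 1/(2*x^2)) := by
  have h := tele_hasSum (fun y => 1/y + 1/(2*y^2)) x
    (fun n => by
      have hn : (0:ℝ) ≤ (n:ℝ) := Nat.cast_nonneg n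
      have h1 : (0:ℝ) < x + n := by linarith
      have h2 : (0:ℝ) < x + n + 1 := by linarith
      apply add_le_add (one_div_le_one_div_of_le h1 (by linarith))
      apply one_div_le_one_div_of_le (by positivity)
      nlinarith)
    (by
      have h1 := tendsto_one_div_shift x
      have h2 : Tendsto (fun n : ℕ => 1/(2*(x+n)^2)) atTop (nhds 0) := by
        apply squeeze_zero (fun n => by positivity) (g := fun n : ℕ => 1/(x+n)) _ h1
        intro n
        have hk := Nat.cast_nonneg (α := ℝ) n
        apply one_div_le_one_div_of_le (by linarith)
        nlinarith
      simpa using h1.add h2)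
  exact h

lemma term_nonneg (x : ℝ) (hx : 1 ≤ x) (k : ℕ) : (0:ℝ) ≤ 1 / (x + k) ^ 2 := by positivity

lemma xk_ge (x : ℝ) (hx : 1 ≤ x) (k : ℕ) : (1:ℝ) ≤ x + k := by
  have : (0:ℝ) ≤ (k:ℝ) := Nat.cast_nonneg k
  linarith

lemma summable_sq (x : ℝ) (hx : 1 ≤ x) : Summable (fun k : ℕ => 1 / (x + k) ^ 2) :=
  Summable.of_nonneg_of_le (term_nonneg x hx)
    (fun k => termwise_upper _ (xk_ge x hx k)) (upper_tele x hx).summable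

lemma tsum_upper (x : ℝ) (hx : 1 ≤ x) :
    (∑' k : ℕ, 1 / (x + k) ^ 2) ≤ 1 / (x - 1/2) := by
  rw [← (upper_tele x hx).tsum_eq]
  exact Summable.tsum_le_tsum (fun k => termwise_upper _ (xk_ge x hx k)) (summable_sq x hx)
    (upper_tele x hx).summable

lemma tsum_lower (x : ℝ) (hx : 1 ≤ x) :
    1/x + 1/(2*x^2) ≤ (∑' k : ℕ, 1 / (x + k) ^ 2) := by
  rw [← (lower_tele x hx).tsum_eq]
  exact Summable.tsum_le_tsum (fun k => termwise_lower _ (xk_ge x hx k)) (lower_tele x hx).summable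
    (summable_sq x hx)

lemma tsum_shift (x : ℝ) (hx : 1 ≤ x) :
    (∑' k : ℕ, 1 / (x + k) ^ 2) = 1 / x ^ 2 + ∑' k : ℕ, 1 / (x + 1 + k) ^ 2 := by
  rw [Summable.tsum_eq_zero_add (summable_sq x hx)]
  congr 1
  · norm_num
  · apply tsum_congr; intro k; push_cast; ring_nf


lemma lower_est (x : ℝ) (hx : 1 ≤ x) : x * (1/x + 1/(2*x^2)) = 1 + 1/(2*x) := by
  have h0 : (0:ℝ) < x := by linarith
  field_simp

lemma upper_est (x : ℝ) (hx : 1 ≤ x) : x * (1/(x-1/2)) ≤ 1 + 1/(2*x) + (x^2)⁻¹ := by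
  have h0 : (0:ℝ) < x := by linarith
  have hq : (0:ℝ) < x - 1/2 := by linarith
  rw [mul_one_div, div_le_iff₀ hq]
  have e1 : (1 + 1/(2*x) + (x^2)⁻¹) * (x - 1/2) = x + 3/(4*x) - 1/(2*x^2) := by
    field_simp
    ring
  rw [e1]
  have h1 : 1/(2*x^2) ≤ 3/(4*x) := by
    rw [div_le_div_iff₀ (by positivity) (by positivity)]
    nlinarith
  linarith

lemma key_bounds (p : ℕ) (hp : 1 ≤ p) :
    1 + 1/(2*(p:ℝ)) ≤ (p:ℝ) * ∑' k : ℕ, (1:ℝ) / ((p:ℝ) + k) ^ 2 ∧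
    (p:ℝ) * (∑' k : ℕ, (1:ℝ) / ((p:ℝ) + k) ^ 2) ≤ 1 + 1/(2*(p:ℝ)) + (((p:ℝ))^2)⁻¹ := by
  have hp1 : (1:ℝ) ≤ p := by exact_mod_cast hp
  have hP : (0:ℝ) < p := by linarith
  constructor
  · have h := mul_le_mul_of_nonneg_left (tsum_lower (p:ℝ) hp1) hP.le
    calc 1 + 1/(2*(p:ℝ)) = (p:ℝ) * (1/(p:ℝ) + 1/(2*(p:ℝ)^2)) := (lower_est _ hp1).symm
      _ ≤ _ := h
  · have h := mul_le_mul_of_nonneg_left (tsum_upper (p:ℝ) hp1) hP.le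
    exact h.trans (upper_est _ hp1)

/-- The map `p ↦ p·ψ'(p)` (trigamma at positive integers) is strictly decreasing,
equals `π²/6` at `p = 1`, tends to `1` at infinity, and
`p ψ'(p) = 1 + 1/(2p) + O(p^{−2})`. -/
theorem trigamma_times_p_properties
    (F : ℕ → ℝ) (hF : ∀ p : ℕ, F p = p * ∑' k : ℕ, (1 : ℝ) / ((p : ℝ) + k) ^ 2) :
    (∀ p : ℕ, 1 ≤ p → F (p + 1) < F p) ∧
    F 1 = π ^ 2 / 6 ∧
    Tendsto F atTop (nhds 1) ∧
    (fun p : ℕ => F p - (1 + 1 / (2 * (p : ℝ)))) =O[atTop] fun p : ℕ => ((p : ℝ) ^ 2)⁻¹ := by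
  refine ⟨?_, ?_, ?_, ?_⟩
  · -- strictly decreasing
    intro p hp
    have hp1 : (1:ℝ) ≤ p := by exact_mod_cast hp
    have hP : (0:ℝ) < p := by linarith
    rw [hF, hF]
    push_cast
    have hshift := tsum_shift (p:ℝ) hp1
    have hub := tsum_upper ((p:ℝ)+1) (by linarith)
    rw [show (p:ℝ)+1-1/2 = p+1/2 by ring] at hub
    have hlt : (∑' k : ℕ, (1:ℝ)/(((p:ℝ)+1)+k)^2) < 1/(p:ℝ) :=
      hub.trans_lt (one_div_lt_one_div_of_lt hP (by linarith))
    rw [hshift]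
    have hinv : (p:ℝ) * (1/(p:ℝ)^2) = 1/(p:ℝ) := by field_simp
    nlinarith [hlt, hinv]
  · -- value at 1
    rw [hF]
    have h := hasSum_zeta_two
    have h2 := Summable.tsum_eq_zero_add h.summable
    rw [h.tsum_eq] at h2
    norm_num at h2
    rw [show ((1:ℕ):ℝ) = 1 by norm_num, one_mul]
    rw [show (∑' k : ℕ, (1:ℝ)/((1:ℝ)+(k:ℝ))^2) = ∑' k : ℕ, ((((k:ℝ))+1)^2)⁻¹ from
      tsum_congr fun k => by rw [one_div]; ring_nf]
    exact h2.symm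
  · -- tendsto 1
    have hlow : Tendsto (fun p : ℕ => 1 + 1/(2*(p:ℝ))) atTop (nhds 1) := by
      have h2p : Tendsto (fun p : ℕ => 2*(p:ℝ)) atTop atTop :=
        (tendsto_natCast_atTop_atTop (R := ℝ)).const_mul_atTop two_pos
      have : Tendsto (fun p : ℕ => 1/(2*(p:ℝ))) atTop (nhds 0) := by
        exact (tendsto_inv_atTop_zero.comp h2p).congr
          (fun p => by simp only [Function.comp_apply, one_div])
      simpa using tendsto_const_nhds.add this
    have hsq : Tendsto (fun p : ℕ => (((p:ℝ))^2)⁻¹) atTop (nhds 0) := by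
      have : Tendsto (fun p : ℕ => ((p:ℝ))^2) atTop atTop :=
        (tendsto_pow_atTop (two_ne_zero)).comp tendsto_natCast_atTop_atTop
      exact this.inv_tendsto_atTop
    have hup : Tendsto (fun p : ℕ => 1 + 1/(2*(p:ℝ)) + (((p:ℝ))^2)⁻¹) atTop (nhds 1) := by
      simpa using hlow.add hsq
    refine tendsto_of_tendsto_of_tendsto_of_le_of_le' hlow hup ?_ ?_
    · filter_upwards [eventually_ge_atTop 1] with p hp
      rw [hF]
      exact (key_bounds p hp).1
    · filter_upwards [eventually_ge_atTop 1] with p hp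
      rw [hF]
      exact (key_bounds p hp).2
  · -- big O
    rw [Asymptotics.isBigO_iff]
    refine ⟨1, ?_⟩
    filter_upwards [eventually_ge_atTop 1] with p hp
    have hk := key_bounds p hp
    rw [hF]
    rw [Real.norm_eq_abs, Real.norm_eq_abs, one_mul]
    rw [abs_of_nonneg (by linarith [hk.1]), abs_of_nonneg (by positivity)]
    linarith [hk.2]
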